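/- arXiv:2010.08217 — 5 statements merged into one kernel-verified Lean document; each statement's English description precedes it below -/
import Mathlib

section
/- Suppose every component F_i of F is strictly convex. If x ∈ ℝⁿ is Pareto stationary for the multiobjective problem min F(x), then x is Pareto optimal. -/
open Filter Topology

noncomputable section

/-- Convexity for extended-real-valued functions. -/
def ERealConvexOn {E : Type*} [AddCommGroup E] [Module ℝ E] (g : E → EReal) : Prop :=
  ∀ x y : E, ∀ a b : ℝ, 0 ≤ a → 0 ≤ b → a + b = 1 →
    g (a • x + b • y) ≤ (a : EReal) * g x + (b : EReal) * g y

/-- Directional derivative (the limit, encoded by `liminf`, of forward difference quotients). -/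
def dirDeriv {E : Type*} [NormedAddCommGroup E] [NormedSpace ℝ E]
    (φ : E → EReal) (x d : E) : EReal :=
  Filter.liminf (fun t : ℝ => ((t⁻¹ : ℝ) : EReal) * (φ (x + t • d) - φ x)) (𝓝[>] (0 : ℝ))

/-- Strict convexity for extended-real-valued functions (strict on the effective domain). -/
def ERealStrictConvexOn {E : Type*} [AddCommGroup E] [Module ℝ E] (g : E → EReal) : Prop :=
  ∀ x y : E, x ≠ y → g x ≠ ⊤ → g y ≠ ⊤ → ∀ a b : ℝ, 0 < a → 0 < b → a + b = 1 →
    g (a • x + b • y) < (a : EReal) * g x + (b : EReal) * g y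

/-- If every component Fᵢ of F is strictly convex and x ∈ ℝⁿ is Pareto stationary for min F(x),
then x is Pareto optimal. -/
theorem pareto_stationary_implies_pareto_optimal_of_strictly_convex
    {n m : ℕ} (hm : 0 < m)
    (f : Fin m → EuclideanSpace ℝ (Fin n) → ℝ)
    (g : Fin m → EuclideanSpace ℝ (Fin n) → EReal)
    (hf : ∀ i, ContDiff ℝ 1 (f i))
    (hg_lsc : ∀ i, LowerSemicontinuous (g i))
    (hg_ne_bot : ∀ i x, g i x ≠ ⊥)
    (hg_proper : ∀ i, ∃ x, g i x ≠ ⊤)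
    (hg_convex : ∀ i, ERealConvexOn (g i))
    (F : Fin m → EuclideanSpace ℝ (Fin n) → EReal)
    (hF : ∀ i x, F i x = (f i x : EReal) + g i x)
    (hF_strict : ∀ i, ERealStrictConvexOn (F i))
    (xstar : EuclideanSpace ℝ (Fin n))
    (hstat : ∀ d : EuclideanSpace ℝ (Fin n), (0 : EReal) ≤ ⨆ i, dirDeriv (F i) xstar d) :
    ¬ ∃ x, (∀ i, F i x ≤ F i xstar) ∧ (∃ j, F j x ≠ F j xstar) := by
  rintro ⟨x, hle, j, hj⟩
  have hxne : xstar ≠ x := fun h => hj (by rw [h])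
  set d : EuclideanSpace ℝ (Fin n) := x - xstar with hd
  have hdne : d ≠ 0 := sub_ne_zero.mpr (Ne.symm hxne)
  -- F is never ⊥
  have hFnb : ∀ i y, F i y ≠ ⊥ := by
    intro i y hb
    rw [hF] at hb
    rcases EReal.add_eq_bot_iff.mp hb with h | h
    · exact EReal.coe_ne_bot _ h
    · exact hg_ne_bot i y h
  -- key estimate
  have key : ∀ i, ∃ c : ℝ, c < 0 ∧ dirDeriv (F i) xstar d ≤ (c : EReal) := by
    intro i
    by_cases htop : F i xstar = ⊤
    · refine ⟨-1, by norm_num, ?_⟩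
      refine Filter.liminf_le_of_frequently_le' ?_
      refine (Filter.eventually_of_mem self_mem_nhdsWithin fun t ht => ?_).frequently
      have ht' : (0 : ℝ) < t := ht
      have h1 : F i (xstar + t • d) - F i xstar = ⊥ := by
        rw [htop, EReal.sub_top]
      rw [h1, EReal.mul_bot_of_pos (by exact_mod_cast inv_pos.mpr ht')]
      exact bot_le
    · set A : ℝ := (F i xstar).toReal with hAdef
      have hA : (A : EReal) = F i xstar := EReal.coe_toReal htop (hFnb i xstar)
      have hxtop : F i x ≠ ⊤ := fun h => htop (top_le_iff.mp (h ▸ hle i))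
      set mid : EuclideanSpace ℝ (Fin n) := xstar + (2⁻¹ : ℝ) • d with hmid
      have hmidne : xstar ≠ mid := by
        intro h
        apply hdne
        rw [hmid, left_eq_add] at h
        simpa using (smul_eq_zero.mp h).resolve_left (by norm_num)
      -- strict convexity between xstar and x at midpoint
      have hmid_eq : mid = (2⁻¹ : ℝ) • xstar + (2⁻¹ : ℝ) • x := by
        rw [hmid, hd]; module
      have hstr := hF_strict i xstar x hxne htop hxtop 2⁻¹ 2⁻¹ (by norm_num) (by norm_num)
        (by norm_num)
      rw [← hmid_eq] at hstr
      have hmidlt : F i mid < (A : EReal) := by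
        refine hstr.trans_le ?_
        calc ((2⁻¹ : ℝ) : EReal) * F i xstar + ((2⁻¹ : ℝ) : EReal) * F i x
            ≤ ((2⁻¹ : ℝ) : EReal) * (A : EReal) + ((2⁻¹ : ℝ) : EReal) * (A : EReal) :=
              add_le_add
                (mul_le_mul_of_nonneg_left hA.ge (by norm_num))
                (mul_le_mul_of_nonneg_left ((hle i).trans hA.ge) (by norm_num))
          _ = (A : EReal) := by norm_cast; ring
      have hmidtop : F i mid ≠ ⊤ := hmidlt.ne_top
      set B : ℝ := (F i mid).toReal with hBdef
      have hB : (B : EReal) = F i mid := EReal.coe_toReal hmidtop (hFnb i mid)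
      have hBA : B < A := by exact_mod_cast hB ▸ hmidlt
      refine ⟨2 * (B - A), by linarith, ?_⟩
      refine Filter.liminf_le_of_frequently_le' ?_
      refine (Filter.eventually_of_mem
        (Ioo_mem_nhdsGT (show (0:ℝ) < 2⁻¹ by norm_num)) fun t ht => ?_).frequently
      obtain ⟨ht0, ht2⟩ := ht
      have h1 : xstar + t • d = ((1 - 2*t) : ℝ) • xstar + ((2*t) : ℝ) • mid := by
        rw [hmid]; module
      have hstr2 := hF_strict i xstar mid hmidne htop hmidtop (1 - 2*t) (2*t)
        (by linarith) (by linarith) (by ring)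
      rw [← h1, ← hA, ← hB] at hstr2
      have hstr3 : F i (xstar + t • d) < (((1 - 2*t) * A + (2*t) * B : ℝ) : EReal) := by
        rw [EReal.coe_add, EReal.coe_mul, EReal.coe_mul]
        exact hstr2
      calc ((t⁻¹ : ℝ) : EReal) * (F i (xstar + t • d) - F i xstar)
          ≤ ((t⁻¹ : ℝ) : EReal) * ((((1 - 2*t) * A + (2*t) * B - A : ℝ)) : EReal) := by
            refine mul_le_mul_of_nonneg_left ?_ (by exact_mod_cast (inv_pos.mpr ht0).le)
            rw [← hA, EReal.coe_sub]
            exact EReal.sub_le_sub hstr3.le le_rfl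
        _ = ((2 * (B - A) : ℝ) : EReal) := by
            rw [← EReal.coe_mul]
            congr 1
            field_simp
            ring
  choose c hcneg hcle using key
  have : Nonempty (Fin m) := ⟨⟨0, hm⟩⟩
  obtain ⟨i0, hi0⟩ := Finite.exists_max c
  have hsup : (⨆ i, dirDeriv (F i) xstar d) ≤ ((c i0 : ℝ) : EReal) :=
    iSup_le fun i => (hcle i).trans (by exact_mod_cast hi0 i)
  have h0 : (0 : EReal) ≤ ((c i0 : ℝ) : EReal) := (hstat d).trans hsup
  have : (0 : ℝ) ≤ c i0 := by exact_mod_cast h0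
  linarith [hcneg i0]
end
end

section
/- Suppose each ∇f_i is Lipschitz continuous with constant L_i > 0 and let L := max_{i∈{1,…,m}} L_i. Then u_0(x) ≥ w_L(x) for all x ∈ ℝⁿ. -/
open Filter Topology

noncomputable section

/-- Strong convexity (modulus σ) for extended-real-valued functions. -/
def ERealStrongConvexOn {E : Type*} [NormedAddCommGroup E] [NormedSpace ℝ E]
    (σ : ℝ) (g : E → EReal) : Prop :=
  ∀ x y : E, ∀ a b : ℝ, 0 ≤ a → 0 ≤ b → a + b = 1 →
    g (a • x + b • y) + ((σ / 2 * (a * b) * ‖x - y‖ ^ 2 : ℝ) : EReal)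
      ≤ (a : EReal) * g x + (b : EReal) * g y

/-- The merit function u₀. -/
def u0 {n m : ℕ} (F : Fin m → EuclideanSpace ℝ (Fin n) → EReal)
    (x : EuclideanSpace ℝ (Fin n)) : EReal :=
  ⨆ y : EuclideanSpace ℝ (Fin n), ⨅ i, (F i x - F i y)

/-- The regularized merit function w_ℓ. -/
def wfun {n m : ℕ} (f : Fin m → EuclideanSpace ℝ (Fin n) → ℝ)
    (g : Fin m → EuclideanSpace ℝ (Fin n) → EReal) (ℓ : ℝ)
    (x : EuclideanSpace ℝ (Fin n)) : EReal :=
  ⨆ y : EuclideanSpace ℝ (Fin n), ⨅ i,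
    (((inner ℝ (gradient (f i) x) (x - y) : ℝ)) : EReal) + (g i x - g i y)
      - ((ℓ / 2 * ‖x - y‖ ^ 2 : ℝ) : EReal)

/-- The mapping ψ_x. -/
def psi {n m : ℕ} (f : Fin m → EuclideanSpace ℝ (Fin n) → ℝ)
    (g : Fin m → EuclideanSpace ℝ (Fin n) → EReal)
    (x d : EuclideanSpace ℝ (Fin n)) : EReal :=
  ⨆ i, ((inner ℝ (gradient (f i) x) d : ℝ) : EReal) + (g i (x + d) - g i x)


lemma descent_lemma {n : ℕ} (f : EuclideanSpace ℝ (Fin n) → ℝ) (hf : ContDiff ℝ 1 f)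
    (K : ℝ) (hK : 0 ≤ K) (hlip : LipschitzWith K.toNNReal (gradient f))
    (x y : EuclideanSpace ℝ (Fin n)) :
    f y ≤ f x + inner ℝ (gradient f x) (y - x) + K / 2 * ‖y - x‖ ^ 2 := by
  set d := y - x with hd
  set c : ℝ := inner ℝ (gradient f x) d with hc
  set h : ℝ → ℝ := fun t => f (x + t • d) - t * c - (K / 2 * ‖d‖ ^ 2) * t ^ 2 with hh
  have hline : ∀ t : ℝ, HasDerivAt (fun t : ℝ => x + t • d) d t := by
    intro t
    simpa using ((hasDerivAt_id t).smul_const d).const_add x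
  have hcomp : ∀ t : ℝ, HasDerivAt (fun t : ℝ => f (x + t • d))
      (inner ℝ (gradient f (x + t • d)) d) t := by
    intro t
    have hgrad := ((hf.differentiable one_ne_zero) (x + t • d)).hasGradientAt
    have := hgrad.hasFDerivAt.comp_hasDerivAt t (hline t)
    simp at this ⊢; exact this
  have hderiv : ∀ t : ℝ, HasDerivAt h
      (inner ℝ (gradient f (x + t • d)) d - c - (K / 2 * ‖d‖ ^ 2) * (2 * t)) t := by
    intro t
    have h1 := (hcomp t).sub ((hasDerivAt_id t).mul_const c)
    have h2 := (hasDerivAt_pow 2 t).const_mul (K / 2 * ‖d‖ ^ 2)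
    have := h1.sub h2
    exact this.congr_deriv (by ring)
  have hanti : AntitoneOn h (Set.Icc (0:ℝ) 1) := by
    apply antitoneOn_of_deriv_nonpos (convex_Icc 0 1)
    · exact fun t _ => ((hderiv t).continuousAt).continuousWithinAt
    · exact fun t _ => ((hderiv t).differentiableAt).differentiableWithinAt
    · intro t ht
      rw [interior_Icc] at ht
      rw [(hderiv t).deriv]
      have hbound : inner ℝ (gradient f (x + t • d)) d - c ≤ K * t * ‖d‖ ^ 2 := by
        have h1 : inner ℝ (gradient f (x + t • d)) d - c
            = inner ℝ (gradient f (x + t • d) - gradient f x) d := by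
          rw [inner_sub_left]
        rw [h1]
        calc inner ℝ (gradient f (x + t • d) - gradient f x) d
            ≤ ‖gradient f (x + t • d) - gradient f x‖ * ‖d‖ := real_inner_le_norm _ _
          _ ≤ (K * ‖t • d‖) * ‖d‖ := by
              apply mul_le_mul_of_nonneg_right _ (norm_nonneg _)
              have := hlip.dist_le_mul (x + t • d) x
              rw [dist_eq_norm] at this
              simpa [Real.coe_toNNReal K hK, dist_eq_norm] using this
          _ = K * t * ‖d‖ ^ 2 := by
              rw [norm_smul, Real.norm_eq_abs, abs_of_pos ht.1]; ring
      nlinarith [sq_nonneg ‖d‖, ht.1.le]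
  have h10 : h 1 ≤ h 0 := hanti (by norm_num) (by norm_num) zero_le_one
  have he : x + d = y := by rw [hd]; abel
  simp only [hh, he, one_smul, zero_smul, add_zero, zero_mul, mul_zero, sub_zero,
    one_pow, mul_one] at h10
  nlinarith [h10]

/-- If each ∇fᵢ is Lipschitz continuous with constant Lᵢ > 0 and L := maxᵢ Lᵢ,
then u₀(x) ≥ w_L(x) for all x. -/
theorem u0_ge_wL
    {n m : ℕ} (hm : 0 < m)
    (f : Fin m → EuclideanSpace ℝ (Fin n) → ℝ)
    (g : Fin m → EuclideanSpace ℝ (Fin n) → EReal)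
    (hf : ∀ i, ContDiff ℝ 1 (f i))
    (hg_lsc : ∀ i, LowerSemicontinuous (g i))
    (hg_ne_bot : ∀ i x, g i x ≠ ⊥)
    (hg_proper : ∀ i, ∃ x, g i x ≠ ⊤)
    (hg_convex : ∀ i, ERealConvexOn (g i))
    (F : Fin m → EuclideanSpace ℝ (Fin n) → EReal)
    (hF : ∀ i x, F i x = (f i x : EReal) + g i x)
    (Li : Fin m → ℝ) (hLi : ∀ i, 0 < Li i)
    (hlip : ∀ i, LipschitzWith (Li i).toNNReal (gradient (f i)))
    (L : ℝ) (hL : IsGreatest (Set.range Li) L) :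
    ∀ x, wfun f g L x ≤ u0 F x := by
  intro x
  rw [wfun, u0]
  apply iSup_mono
  intro y
  apply iInf_mono
  intro i
  have hgxb := hg_ne_bot i x
  have hgyb := hg_ne_bot i y
  by_cases hgy : g i y = ⊤
  · have h1 : g i x - g i y = ⊥ := by
      rw [hgy]; exact EReal.sub_top _
    rw [h1, EReal.add_bot, EReal.bot_sub]
    exact bot_le
  obtain ⟨b, hb⟩ : ∃ b : ℝ, g i y = (b : EReal) := ⟨(g i y).toReal, (EReal.coe_toReal hgy hgyb).symm⟩
  by_cases hgx : g i x = ⊤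
  · have h1 : F i x - F i y = ⊤ := by
      rw [hF, hF, hgx, hb, ← EReal.coe_add]
      rw [EReal.add_top_of_ne_bot (EReal.coe_ne_bot _)]
      exact EReal.top_sub_coe _
    rw [h1]; exact le_top
  obtain ⟨a, ha⟩ : ∃ a : ℝ, g i x = (a : EReal) := ⟨(g i x).toReal, (EReal.coe_toReal hgx hgxb).symm⟩
  rw [hF, hF, ha, hb]
  have hdesc := descent_lemma (f i) (hf i) (Li i) (hLi i).le (hlip i) x y
  have hLle : Li i ≤ L := hL.2 (Set.mem_range_self i)
  have hinner : (inner ℝ (gradient (f i) x) (x - y) : ℝ)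
      = - inner ℝ (gradient (f i) x) (y - x) := by
    rw [← inner_neg_right]
    congr 1
    abel
  have hnorm : ‖x - y‖ = ‖y - x‖ := norm_sub_rev _ _
  norm_cast
  rw [hinner, hnorm] at *
  have hsq : (0:ℝ) ≤ ‖y - x‖ ^ 2 := sq_nonneg _
  nlinarith [hdesc, mul_le_mul_of_nonneg_right hLle hsq]
end
end

section
/- Assume each f_i is strongly convex with modulus μ_i > 0 and let μ := min_{i∈{1,…,m}} μ_i. Then u_0(x) ≤ w_μ(x) for all x ∈ ℝⁿ. -/
open Filter Topology

noncomputable section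

lemma strong_grad_ineq {n : ℕ} (f : EuclideanSpace ℝ (Fin n) → ℝ)
    (hf : ContDiff ℝ 1 f) (μ : ℝ)
    (hsc : StrongConvexOn Set.univ μ f) (x y : EuclideanSpace ℝ (Fin n)) :
    f x - f y ≤ (inner ℝ (gradient f x) (x - y) : ℝ) - μ / 2 * ‖x - y‖ ^ 2 := by
  have hdiff : DifferentiableAt ℝ f x := (hf.differentiable one_ne_zero) x
  have hF : HasFDerivAt f ((InnerProductSpace.toDual ℝ _) (gradient f x)) x :=
    hasGradientAt_iff_hasFDerivAt.mp hdiff.hasGradientAt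
  have hc : HasDerivAt (fun t : ℝ => x + t • (y - x)) (y - x) 0 := by
    simpa using ((hasDerivAt_id (0 : ℝ)).smul_const (y - x)).const_add x
  have hφ : HasDerivAt (fun t : ℝ => f (x + t • (y - x)))
      ((inner ℝ (gradient f x) (y - x) : ℝ)) 0 := by
    have hF' : HasFDerivAt f ((InnerProductSpace.toDual ℝ _) (gradient f x))
        (x + (0 : ℝ) • (y - x)) := by simpa using hF
    exact hF'.comp_hasDerivAt 0 hc
  have hslope : Filter.Tendsto (fun t : ℝ => (f (x + t • (y - x)) - f x) / t)
      (𝓝[>] (0 : ℝ)) (𝓝 ((inner ℝ (gradient f x) (y - x) : ℝ))) := by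
    have h := hasDerivAt_iff_tendsto_slope.mp hφ
    have h' := h.mono_left (nhdsWithin_mono 0 (fun t ht => ne_of_gt ht))
    refine h'.congr' ?_
    filter_upwards [self_mem_nhdsWithin] with t _
    simp [slope, div_eq_inv_mul]
  have hrhs : Filter.Tendsto (fun t : ℝ => f y - f x - (1 - t) * (μ / 2 * ‖x - y‖ ^ 2))
      (𝓝[>] (0 : ℝ)) (𝓝 (f y - f x - μ / 2 * ‖x - y‖ ^ 2)) := by
    have : Continuous (fun t : ℝ => f y - f x - (1 - t) * (μ / 2 * ‖x - y‖ ^ 2)) := by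
      continuity
    have h := (this.tendsto 0).mono_left (nhdsWithin_le_nhds (s := Set.Ioi (0:ℝ)))
    simpa using h
  have key : (inner ℝ (gradient f x) (y - x) : ℝ) ≤ f y - f x - μ / 2 * ‖x - y‖ ^ 2 := by
    refine le_of_tendsto_of_tendsto hslope hrhs ?_
    filter_upwards [Ioo_mem_nhdsGT_of_mem (Set.mem_Ico.mpr ⟨le_refl _, one_pos⟩)] with t ht
    obtain ⟨ht0, ht1⟩ := ht
    have hconv := hsc.2 (Set.mem_univ x) (Set.mem_univ y)
      (by linarith : (0:ℝ) ≤ 1 - t) ht0.le (by ring)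
    have heq : (1 - t) • x + t • y = x + t • (y - x) := by
      rw [smul_sub, sub_smul, one_smul]; abel
    rw [heq] at hconv
    simp only [smul_eq_mul] at hconv
    rw [div_le_iff₀ ht0]
    nlinarith [hconv]
  have hneg : (inner ℝ (gradient f x) (x - y) : ℝ) = -(inner ℝ (gradient f x) (y - x) : ℝ) := by
    rw [← inner_neg_right, neg_sub]
  linarith

/-- If each fᵢ is strongly convex with modulus μᵢ > 0 and μ := minᵢ μᵢ,
then u₀(x) ≤ w_μ(x) for all x. -/
theorem u0_le_w_mu
    {n m : ℕ} (hm : 0 < m)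
    (f : Fin m → EuclideanSpace ℝ (Fin n) → ℝ)
    (g : Fin m → EuclideanSpace ℝ (Fin n) → EReal)
    (hf : ∀ i, ContDiff ℝ 1 (f i))
    (hg_lsc : ∀ i, LowerSemicontinuous (g i))
    (hg_ne_bot : ∀ i x, g i x ≠ ⊥)
    (hg_proper : ∀ i, ∃ x, g i x ≠ ⊤)
    (hg_convex : ∀ i, ERealConvexOn (g i))
    (F : Fin m → EuclideanSpace ℝ (Fin n) → EReal)
    (hF : ∀ i x, F i x = (f i x : EReal) + g i x)
    (μi : Fin m → ℝ) (hμi : ∀ i, 0 < μi i)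
    (hsc : ∀ i, StrongConvexOn Set.univ (μi i) (f i))
    (μ : ℝ) (hμ : IsLeast (Set.range μi) μ) :
    ∀ x, u0 F x ≤ wfun f g μ x := by
  intro x
  rw [u0, wfun]
  refine iSup_le fun y => le_iSup_of_le y (iInf_mono fun i => ?_)
  rw [hF i x, hF i y]
  rcases eq_or_ne (g i y) ⊤ with hy | hy
  · rw [hy]
    have : ((f i y : EReal) + ⊤) = ⊤ := EReal.coe_add_top _
    rw [this, EReal.sub_top]
    exact bot_le
  · lift g i y to ℝ using ⟨hy, hg_ne_bot i y⟩ with gy hgy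
    rcases eq_or_ne (g i x) ⊤ with hx | hx
    · rw [hx]
      have h1 : (⊤ : EReal) - (gy : EReal) = ⊤ := EReal.top_sub_coe _
      have h2 : ((inner ℝ (gradient (f i) x) (x - y) : ℝ) : EReal) + ((⊤ : EReal) - (gy : EReal))
          = ⊤ := by rw [h1]; exact EReal.coe_add_top _
      rw [h2, EReal.top_sub_coe]
      exact le_top
    · lift g i x to ℝ using ⟨hx, hg_ne_bot i x⟩ with gx hgx
      have hμle : μ ≤ μi i := hμ.2 (Set.mem_range_self i)
      have hkey := strong_grad_ineq (f i) (hf i) μ ((hsc i).mono hμle) x y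
      have : ((f i x : EReal) + (gx : EReal)) - ((f i y : EReal) + (gy : EReal))
          = (((f i x + gx) - (f i y + gy) : ℝ) : EReal) := by
        norm_cast
      rw [this]
      have : ((inner ℝ (gradient (f i) x) (x - y) : ℝ) : EReal) + ((gx : EReal) - (gy : EReal))
          - ((μ / 2 * ‖x - y‖ ^ 2 : ℝ) : EReal)
          = (((inner ℝ (gradient (f i) x) (x - y) : ℝ) + (gx - gy)
              - μ / 2 * ‖x - y‖ ^ 2 : ℝ) : EReal) := by
        norm_cast
      rw [this]
      exact_mod_cast (by linarith : (f i x + gx) - (f i y + gy)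
        ≤ (inner ℝ (gradient (f i) x) (x - y) : ℝ) + (gx - gy) - μ / 2 * ‖x - y‖ ^ 2)
end
end

section
/- Let ℓ > 0 and let d be the minimizer over ℝⁿ of d ↦ ψ_x(d) + (ℓ/2)‖d‖², where ψ_x(d) := max_{i∈{1,…,m}} {∇f_i(x)ᵀd + g_i(x + d) − g_i(x)}. Then ψ_x(d) ≤ −ℓ‖d‖². -/
open Filter Topology

noncomputable section

/-- If d minimizes d ↦ ψ_x(d) + (ℓ/2)‖d‖² over ℝⁿ, then ψ_x(d) ≤ −ℓ‖d‖². -/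
theorem psi_le_neg_ell_norm_sq
    {n m : ℕ} (hm : 0 < m)
    (f : Fin m → EuclideanSpace ℝ (Fin n) → ℝ)
    (g : Fin m → EuclideanSpace ℝ (Fin n) → EReal)
    (hf : ∀ i, ContDiff ℝ 1 (f i))
    (hg_lsc : ∀ i, LowerSemicontinuous (g i))
    (hg_ne_bot : ∀ i x, g i x ≠ ⊥)
    (hg_proper : ∀ i, ∃ x, g i x ≠ ⊤)
    (hg_convex : ∀ i, ERealConvexOn (g i))
    (ℓ : ℝ) (hℓ : 0 < ℓ)
    (x d : EuclideanSpace ℝ (Fin n))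
    (hd : ∀ d' : EuclideanSpace ℝ (Fin n),
      psi f g x d + ((ℓ / 2 * ‖d‖ ^ 2 : ℝ) : EReal) ≤
        psi f g x d' + ((ℓ / 2 * ‖d'‖ ^ 2 : ℝ) : EReal)) :
    psi f g x d ≤ ((-(ℓ * ‖d‖ ^ 2) : ℝ) : EReal) := by
  -- First: psi f g x 0 ≤ 0
  have hpsi0 : psi f g x 0 ≤ (0 : EReal) := by
    apply iSup_le
    intro i
    rw [add_zero]
    rcases eq_or_ne (g i x) ⊤ with h | h
    · simp [h, EReal.sub_top, EReal.add_bot]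
    · lift g i x to ℝ using ⟨h, hg_ne_bot i x⟩ with c hc
      simp [← EReal.coe_sub]
  -- psi f g x d ≠ ⊤
  have h0 := hd 0
  simp only [norm_zero, add_zero] at h0
  have h0' : psi f g x d + ((ℓ / 2 * ‖d‖ ^ 2 : ℝ) : EReal) ≤ 0 := by
    calc psi f g x d + ((ℓ / 2 * ‖d‖ ^ 2 : ℝ) : EReal)
        ≤ psi f g x 0 + ((ℓ / 2 * (0:ℝ) ^ 2 : ℝ) : EReal) := h0
      _ ≤ 0 := by simpa using hpsi0
  have hne_top : psi f g x d ≠ ⊤ := by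
    intro h
    rw [h] at h0'
    rw [EReal.top_add_coe] at h0'
    exact absurd h0' (by simp)
  rcases eq_or_ne (psi f g x d) ⊥ with hbot | hne_bot
  · rw [hbot]; exact bot_le
  lift psi f g x d to ℝ using ⟨hne_top, hne_bot⟩ with a ha
  set N := ‖d‖ ^ 2 with hN
  have hN0 : 0 ≤ N := by positivity
  -- key convexity inequality for each t ∈ (0,1)
  have key : ∀ t : ℝ, 0 < t → t < 1 →
      psi f g x ((1 - t) • d) ≤ (((1 - t) * a : ℝ) : EReal) := by
    intro t ht ht1
    have h1t : (0:ℝ) < 1 - t := by linarith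
    apply iSup_le
    intro i
    have hle : ((inner ℝ (gradient (f i) x) d : ℝ) : EReal) + (g i (x + d) - g i x)
        ≤ (a : EReal) := ha ▸ le_iSup (fun j => ((inner ℝ (gradient (f j) x) d : ℝ) : EReal)
          + (g j (x + d) - g j x)) i
    rcases eq_or_ne (g i x) ⊤ with hx | hx
    · rw [hx, EReal.sub_top, EReal.add_bot]
      exact bot_le
    lift g i x to ℝ using ⟨hx, hg_ne_bot i x⟩ with c hc
    rcases eq_or_ne (g i (x + d)) ⊤ with hxd | hxd
    · exfalso
      rw [hxd, EReal.top_sub_coe, EReal.coe_add_top] at hle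
      exact absurd (top_le_iff.mp hle) (by simp)
    lift g i (x + d) to ℝ using ⟨hxd, hg_ne_bot i (x + d)⟩ with b hb
    -- convexity of g i
    have hconv := hg_convex i (x + d) x (1 - t) t (le_of_lt h1t) (le_of_lt ht) (by ring)
    have heq : (1 - t) • (x + d) + t • x = x + (1 - t) • d := by
      module
    rw [heq, ← hc, ← hb, ← EReal.coe_mul, ← EReal.coe_mul, ← EReal.coe_add] at hconv
    -- the inner product is linear
    have hinner : (inner ℝ (gradient (f i) x) ((1 - t) • d) : ℝ)
        = (1 - t) * (inner ℝ (gradient (f i) x) d : ℝ) := real_inner_smul_right _ _ _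
    have hle' : (inner ℝ (gradient (f i) x) d : ℝ) + (b - c) ≤ a := by
      rw [← EReal.coe_sub, ← EReal.coe_add] at hle
      exact_mod_cast hle
    calc ((inner ℝ (gradient (f i) x) ((1 - t) • d) : ℝ) : EReal)
          + (g i (x + (1 - t) • d) - (c : EReal))
        ≤ ((inner ℝ (gradient (f i) x) ((1 - t) • d) : ℝ) : EReal)
          + ((((1 - t) * b + t * c : ℝ) : EReal) - (c : EReal)) := by
          exact add_le_add_right (EReal.sub_le_sub hconv le_rfl) _
      _ = ((((inner ℝ (gradient (f i) x) ((1 - t) • d) : ℝ)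
            + ((1 - t) * b + t * c) - c : ℝ)) : EReal) := by
          rw [← EReal.coe_sub, ← EReal.coe_add]
          congr 1
          ring
      _ ≤ (((1 - t) * a : ℝ) : EReal) := by
          rw [EReal.coe_le_coe_iff, hinner]
          nlinarith [hle', h1t]
  -- use minimality at d' = (1-t) • d
  have hreal : ∀ t : ℝ, 0 < t → t < 1 → a ≤ -(ℓ * N) + ℓ * N / 2 * t := by
    intro t ht ht1
    have h1t : (0:ℝ) < 1 - t := by linarith
    have hd' := hd ((1 - t) • d)
    have hnorm : ‖(1 - t) • d‖ = (1 - t) * ‖d‖ := by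
      rw [norm_smul, Real.norm_eq_abs, abs_of_pos h1t]
    rw [hnorm] at hd'
    have hchain : ((a : EReal)) + ((ℓ / 2 * N : ℝ) : EReal)
        ≤ (((1 - t) * a : ℝ) : EReal) + ((ℓ / 2 * ((1 - t) * ‖d‖) ^ 2 : ℝ) : EReal) :=
      le_trans hd' (add_le_add_left (key t ht ht1) _)
    rw [← EReal.coe_add, ← EReal.coe_add, EReal.coe_le_coe_iff] at hchain
    have hN' : ((1 - t) * ‖d‖) ^ 2 = (1 - t) ^ 2 * N := by rw [hN]; ring
    rw [hN'] at hchain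
    nlinarith [hchain, ht, ht1, hN0, hℓ.le]
  -- conclude by letting t → 0
  rw [EReal.coe_le_coe_iff]
  by_contra hcon
  push_neg at hcon
  set ε := a + ℓ * N with hε
  have hε0 : 0 < ε := by rw [hε]; linarith
  set t0 := min (1/2 : ℝ) (ε / (ℓ * N / 2 + 1)) with ht0
  have hden : (0:ℝ) < ℓ * N / 2 + 1 := by nlinarith [mul_nonneg hℓ.le hN0]
  have ht0pos : 0 < t0 := lt_min (by norm_num) (div_pos hε0 hden)
  have ht0lt1 : t0 < 1 := lt_of_le_of_lt (min_le_left _ _) (by norm_num)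
  have h1 := hreal t0 ht0pos ht0lt1
  have h2 : ℓ * N / 2 * t0 < ε := by
    have ht0le : t0 ≤ ε / (ℓ * N / 2 + 1) := min_le_right _ _
    have := mul_le_mul_of_nonneg_left ht0le (by positivity : (0:ℝ) ≤ ℓ * N / 2)
    calc ℓ * N / 2 * t0 ≤ ℓ * N / 2 * (ε / (ℓ * N / 2 + 1)) := this
      _ < ε := by
          rw [mul_div_assoc'] at *
          rw [div_lt_iff₀ hden]
          nlinarith [mul_nonneg hℓ.le hN0]
  linarith
end
end

section
/- Suppose there exists a nonempty set 𝒥 ⊆ {1,…,m} such that for i ∈ 𝒥 the function F_i is bounded below by F_i^min on ℝⁿ. Let F^min := min_{i∈𝒥} F_i^min and F_0^max := max_{i∈{1,…,m}} F_i(x^0). Then the multiobjective proximal gradient method with parameter ℓ > L generates a sequence {x^k} satisfying min_{0 ≤ j ≤ k−1} w_1(x^j) ≤ (F_0^max − F^min)·max{1, ℓ} / k for every k ≥ 1. -/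
open Filter Topology

noncomputable section

/- ### Auxiliary lemmas -/

lemma my_descent_lemma {n : ℕ} (f : EuclideanSpace ℝ (Fin n) → ℝ) (hf : ContDiff ℝ 1 f)
    {C : ℝ} (hC : 0 ≤ C) (hlip : LipschitzWith C.toNNReal (gradient f))
    (x d : EuclideanSpace ℝ (Fin n)) :
    f (x + d) ≤ f x + inner ℝ (gradient f x) d + C / 2 * ‖d‖ ^ 2 := by
  have hdiff : Differentiable ℝ f := hf.differentiable one_ne_zero
  set φ' : ℝ → ℝ := fun t => inner ℝ (gradient f (x + t • d)) d with hφ'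
  have hginner : ∀ y : EuclideanSpace ℝ (Fin n), (inner ℝ (gradient f y) d : ℝ) = fderiv ℝ f y d := by
    intro y
    simp [gradient, InnerProductSpace.toDual_symm_apply]
  have hderiv : ∀ t : ℝ, HasDerivAt (fun s : ℝ => f (x + s • d)) (φ' t) t := by
    intro t
    have h1 : HasDerivAt (fun s : ℝ => x + s • d) d t := by
      simpa using ((hasDerivAt_id t).smul_const d).const_add x
    have h2 := (hdiff (x + t • d)).hasFDerivAt.comp_hasDerivAt t h1
    show HasDerivAt _ (inner ℝ (gradient f (x + t • d)) d) t
    rw [hginner]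
    exact h2
  have hgcont : Continuous (gradient f) := hlip.continuous
  have hcont : Continuous φ' := by
    apply Continuous.inner
    · exact hgcont.comp (by continuity)
    · exact continuous_const
  have hFTC : ∫ t in (0:ℝ)..1, φ' t = f (x + d) - f x := by
    have := intervalIntegral.integral_eq_sub_of_hasDerivAt
      (f := fun s : ℝ => f (x + s • d)) (f' := φ') (a := 0) (b := 1)
      (fun t _ => hderiv t) (hcont.intervalIntegrable 0 1)
    simpa using this
  have hbound : ∀ t ∈ Set.Icc (0:ℝ) 1, φ' t ≤ φ' 0 + C * ‖d‖ ^ 2 * t := by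
    intro t ht
    have h1 : φ' t - φ' 0 = inner ℝ (gradient f (x + t • d) - gradient f (x + (0:ℝ) • d)) d := by
      simp [hφ', inner_sub_left]
    have h2 : ‖gradient f (x + t • d) - gradient f (x + (0:ℝ) • d)‖ ≤ C * (t * ‖d‖) := by
      have h := hlip.dist_le_mul (x + t • d) (x + (0:ℝ) • d)
      rw [dist_eq_norm] at h
      calc ‖gradient f (x + t • d) - gradient f (x + (0:ℝ) • d)‖
          ≤ (C.toNNReal : ℝ) * ‖(x + t • d) - (x + (0:ℝ) • d)‖ := h
        _ = C * ‖t • d‖ := by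
            rw [Real.coe_toNNReal _ hC]
            congr 1
            simp
        _ = C * (|t| * ‖d‖) := by rw [norm_smul]; rfl
        _ = C * (t * ‖d‖) := by rw [abs_of_nonneg ht.1]
    have h3 : φ' t - φ' 0 ≤ C * (t * ‖d‖) * ‖d‖ := by
      rw [h1]
      calc (inner ℝ (gradient f (x + t • d) - gradient f (x + (0:ℝ) • d)) d : ℝ)
          ≤ ‖gradient f (x + t • d) - gradient f (x + (0:ℝ) • d)‖ * ‖d‖ :=
            real_inner_le_norm _ _
        _ ≤ C * (t * ‖d‖) * ‖d‖ := mul_le_mul_of_nonneg_right h2 (norm_nonneg d)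
    nlinarith [h3]
  have hint : ∫ t in (0:ℝ)..1, φ' t ≤ ∫ t in (0:ℝ)..1, (φ' 0 + C * ‖d‖ ^ 2 * t) := by
    apply intervalIntegral.integral_mono_on (by norm_num)
      (hcont.intervalIntegrable 0 1)
      ((continuous_const.add (continuous_const.mul continuous_id)).intervalIntegrable 0 1)
    intro t ht
    exact hbound t ht
  have hval : ∫ t in (0:ℝ)..1, (φ' 0 + C * ‖d‖ ^ 2 * t) = φ' 0 + C / 2 * ‖d‖ ^ 2 := by
    rw [intervalIntegral.integral_add (intervalIntegrable_const)
      ((by continuity : Continuous fun t : ℝ => C * ‖d‖ ^ 2 * t).intervalIntegrable 0 1)]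
    rw [intervalIntegral.integral_const_mul (μ := MeasureTheory.volume) (C * ‖d‖ ^ 2) (fun t => t), integral_id, intervalIntegral.integral_const]
    simp
    ring
  have hφ0 : φ' 0 = inner ℝ (gradient f x) d := by simp [hφ']
  rw [hFTC] at hint
  rw [hval, hφ0] at hint
  linarith

lemma my_iSup_add_coe {ι : Sort*} (A : ι → EReal) (c : ℝ) :
    (⨆ i, A i) + (c : EReal) ≤ ⨆ i, (A i + (c : EReal)) := by
  set S := ⨆ i, (A i + (c : EReal)) with hS
  have h1 : ∀ i, A i ≤ S - (c : EReal) := by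
    intro i
    have h2 : A i + c ≤ S := le_iSup (fun i => A i + (c : EReal)) i
    have h3 : A i + c - c ≤ S - c := add_le_add_left h2 _
    rwa [EReal.add_sub_cancel_right] at h3
  have h4 : (⨆ i, A i) ≤ S - c := iSup_le h1
  calc (⨆ i, A i) + (c : EReal) ≤ S - c + c := add_le_add_left h4 _
    _ = S := EReal.sub_add_cancel

lemma my_le_coe_mul {t M : ℝ} (ht : 0 < t) (htM : t * M = 1) {a b : EReal}
    (h : (t : EReal) * a ≤ b) : a ≤ (M : EReal) * b := by
  have hM : (0:ℝ) ≤ M := by nlinarith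
  have h2 : (M : EReal) * ((t : EReal) * a) ≤ (M : EReal) * b :=
    mul_le_mul_of_nonneg_left h (by exact_mod_cast hM)
  calc a = ((M * t : ℝ) : EReal) * a := by
        rw [mul_comm t M] at htM; rw [htM]; simp
    _ = (M : EReal) * ((t : EReal) * a) := by rw [EReal.coe_mul, mul_assoc]
    _ ≤ (M : EReal) * b := h2

lemma my_iInf_neg_le {ι : Sort*} (B : ι → EReal) (C : EReal) (h : C ≤ ⨆ i, B i) :
    (⨅ i, -(B i)) ≤ -C := by
  have h1 : (⨆ i, B i) ≤ -(⨅ i, -(B i)) := by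
    apply iSup_le
    intro i
    exact EReal.le_neg_of_le_neg (iInf_le (fun i => -(B i)) i)
  exact EReal.le_neg_of_le_neg (le_trans h h1)

lemma my_wfun_le_neg {n m : ℕ} (f : Fin m → EuclideanSpace ℝ (Fin n) → ℝ)
    (g : Fin m → EuclideanSpace ℝ (Fin n) → EReal) (ℓ : ℝ)
    (x : EuclideanSpace ℝ (Fin n))
    (hgb : ∀ i, g i x ≠ ⊥) (hgt : ∀ i, g i x ≠ ⊤)
    (hgyb : ∀ i y, g i y ≠ ⊥)
    (D : EReal)
    (hD : ∀ d', D ≤ psi f g x d' + ((ℓ / 2 * ‖d'‖ ^ 2 : ℝ) : EReal)) :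
    wfun f g ℓ x ≤ -D := by
  apply iSup_le
  intro y
  set d' := y - x with hd'
  have hxd : x + d' = y := by rw [hd']; abel
  set c : ℝ := ℓ / 2 * ‖d'‖ ^ 2 with hc
  set A : Fin m → EReal := fun i =>
    ((inner ℝ (gradient (f i) x) d' : ℝ) : EReal) + (g i (x + d') - g i x) with hA
  have hterm : ∀ i,
      (((inner ℝ (gradient (f i) x) (x - y) : ℝ)) : EReal) + (g i x - g i y)
        - ((ℓ / 2 * ‖x - y‖ ^ 2 : ℝ) : EReal) = -(A i + (c : EReal)) := by
    intro i
    have hnorm : ‖x - y‖ = ‖d'‖ := by rw [hd', norm_sub_rev]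
    have hinner : (inner ℝ (gradient (f i) x) (x - y) : ℝ) = -(inner ℝ (gradient (f i) x) d' : ℝ) := by
      rw [← neg_sub y x, inner_neg_right]
    set a : ℝ := (inner ℝ (gradient (f i) x) d' : ℝ)
    have hGx := EReal.coe_toReal (hgt i) (hgb i)
    set G : ℝ := (g i x).toReal
    by_cases hgy : g i y = ⊤
    · rw [hA]
      simp only [hxd, hgy]
      rw [← hGx]
      rw [hnorm, hinner]
      have l1 : (G : EReal) - ⊤ = ⊥ := EReal.sub_top _
      have l2 : (⊤ : EReal) - (G : EReal) = ⊤ := EReal.top_sub_coe _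
      rw [l1, l2]
      have l3 : ((-a : ℝ) : EReal) + ⊥ = ⊥ := EReal.add_bot _
      have l4 : ((a : ℝ) : EReal) + ⊤ = ⊤ := EReal.add_top_of_ne_bot (EReal.coe_ne_bot _)
      rw [l3, l4]
      have l5 : (⊤ : EReal) + (c : EReal) = ⊤ := EReal.top_add_coe _
      rw [l5]
      simp
    · have hgyr := EReal.coe_toReal hgy (hgyb i y)
      set b : ℝ := (g i y).toReal
      rw [hA]
      simp only [hxd]
      rw [← hGx, ← hgyr, hnorm, hinner]
      norm_cast
      simp only [hc]
      ring
  calc (⨅ i, (((inner ℝ (gradient (f i) x) (x - y) : ℝ)) : EReal) + (g i x - g i y)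
        - ((ℓ / 2 * ‖x - y‖ ^ 2 : ℝ) : EReal))
      = ⨅ i, -(A i + (c : EReal)) := iInf_congr hterm
    _ ≤ -(psi f g x d' + (c : EReal)) := by
        apply my_iInf_neg_le
        exact my_iSup_add_coe A c
    _ ≤ -D := EReal.neg_le_neg_iff.mpr (hD d')

lemma my_psi_zero {n m : ℕ} (hm : 0 < m) (f : Fin m → EuclideanSpace ℝ (Fin n) → ℝ)
    (g : Fin m → EuclideanSpace ℝ (Fin n) → EReal)
    (x : EuclideanSpace ℝ (Fin n))
    (hgb : ∀ i, g i x ≠ ⊥) (hgt : ∀ i, g i x ≠ ⊤) :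
    psi f g x 0 = 0 := by
  have : Nonempty (Fin m) := ⟨⟨0, hm⟩⟩
  rw [psi]
  have h : ∀ i : Fin m, ((inner ℝ (gradient (f i) x) (0 : EuclideanSpace ℝ (Fin n)) : ℝ) : EReal)
      + (g i (x + 0) - g i x) = 0 := by
    intro i
    have hGx := EReal.coe_toReal (hgt i) (hgb i)
    rw [add_zero, ← hGx, inner_zero_right]
    norm_cast
    ring
  rw [iSup_congr h, iSup_const]

lemma my_scaling {n m : ℕ} (hm : 0 < m) (f : Fin m → EuclideanSpace ℝ (Fin n) → ℝ)
    (g : Fin m → EuclideanSpace ℝ (Fin n) → EReal) {ℓ : ℝ} (hℓ : 0 < ℓ)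
    (hconv : ∀ i, ERealConvexOn (g i))
    (hgyb : ∀ i y, g i y ≠ ⊥)
    (x : EuclideanSpace ℝ (Fin n)) (hgt : ∀ i, g i x ≠ ⊤) :
    wfun f g 1 x ≤ ((max 1 ℓ : ℝ) : EReal) * wfun f g ℓ x := by
  set M : ℝ := max 1 ℓ with hM
  have hM1 : (1:ℝ) ≤ M := le_max_left _ _
  have hMpos : (0:ℝ) < M := by linarith
  set t : ℝ := M⁻¹ with htdef
  have ht : 0 < t := by positivity
  have htM : t * M = 1 := inv_mul_cancel₀ (ne_of_gt hMpos)
  have ht1 : t ≤ 1 := by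
    rw [htdef, inv_le_one_iff₀]
    right; exact hM1
  have hℓt : ℓ * t ≤ 1 := by
    have : ℓ ≤ M := le_max_right _ _
    calc ℓ * t ≤ M * t := by nlinarith
      _ = 1 := by rw [mul_comm]; exact htM
  rw [wfun]
  apply iSup_le
  intro y
  apply my_le_coe_mul ht htM
  set y' : EuclideanSpace ℝ (Fin n) := x + t • (y - x) with hy'
  have hxy' : x - y' = t • (x - y) := by rw [hy']; rw [smul_sub, smul_sub]; abel
  have hcomb : y' = (1 - t) • x + t • y := by
    rw [hy', smul_sub, sub_smul, one_smul]; abel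
  calc (t : EReal) * (⨅ i, (((inner ℝ (gradient (f i) x) (x - y) : ℝ)) : EReal) + (g i x - g i y)
        - ((1 / 2 * ‖x - y‖ ^ 2 : ℝ) : EReal))
      ≤ ⨅ i, (((inner ℝ (gradient (f i) x) (x - y') : ℝ)) : EReal) + (g i x - g i y')
        - ((ℓ / 2 * ‖x - y'‖ ^ 2 : ℝ) : EReal) := by
        apply le_iInf
        intro i
        have step1 : (t : EReal) * (⨅ j, (((inner ℝ (gradient (f j) x) (x - y) : ℝ)) : EReal)
            + (g j x - g j y) - ((1 / 2 * ‖x - y‖ ^ 2 : ℝ) : EReal)) ≤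
            (t : EReal) * ((((inner ℝ (gradient (f i) x) (x - y) : ℝ)) : EReal)
            + (g i x - g i y) - ((1 / 2 * ‖x - y‖ ^ 2 : ℝ) : EReal)) := by
          apply mul_le_mul_of_nonneg_left (iInf_le _ i) (by exact_mod_cast ht.le)
        refine step1.trans ?_
        have hGx := EReal.coe_toReal (hgt i) (hgyb i x)
        set G : ℝ := (g i x).toReal
        set cI : ℝ := (inner ℝ (gradient (f i) x) (x - y) : ℝ) with hcI
        have hinner' : (inner ℝ (gradient (f i) x) (x - y') : ℝ) = t * cI := by
          rw [hxy', inner_smul_right]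
        have hnorm' : ‖x - y'‖ = t * ‖x - y‖ := by
          rw [hxy', norm_smul, Real.norm_eq_abs, abs_of_pos ht]
        by_cases hgy : g i y = ⊤
        · rw [← hGx, hgy]
          have l1 : (G : EReal) - ⊤ = ⊥ := EReal.sub_top _
          rw [l1, EReal.add_bot, EReal.bot_sub, EReal.coe_mul_bot_of_pos ht]
          exact bot_le
        · have hb := EReal.coe_toReal hgy (hgyb i y)
          set b : ℝ := (g i y).toReal
          have hconvy : g i y' ≤ (((1 - t) * G + t * b : ℝ) : EReal) := by
            have h := hconv i x y (1 - t) t (by linarith) ht.le (by ring)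
            rw [← hcomb, ← hGx, ← hb] at h
            calc g i y' ≤ ((1 - t : ℝ) : EReal) * (G : EReal) + (t : EReal) * (b : EReal) := h
              _ = (((1 - t) * G + t * b : ℝ) : EReal) := by norm_cast
          have hy'top : g i y' ≠ ⊤ := by
            intro hcon
            rw [hcon] at hconvy
            exact (EReal.coe_lt_top ((1 - t) * G + t * b)).not_ge hconvy
          have hgy' := EReal.coe_toReal hy'top (hgyb i y')
          set gy' : ℝ := (g i y').toReal
          have hconvyr : gy' ≤ (1 - t) * G + t * b := by
            rw [← hgy'] at hconvy
            exact_mod_cast hconvy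
          rw [← hGx, ← hb, ← hgy', hinner', hnorm']
          have hr : (0:ℝ) ≤ ‖x - y‖ ^ 2 := by positivity
          have hreal : t * (cI + (G - b) - 1 / 2 * ‖x - y‖ ^ 2) ≤
              t * cI + (G - gy') - ℓ / 2 * (t * ‖x - y‖) ^ 2 := by
            nlinarith [hr, ht, hℓt, hconvyr]
          exact_mod_cast hreal
    _ ≤ wfun f g ℓ x := by
        rw [wfun]
        exact le_iSup (fun yy => ⨅ i, (((inner ℝ (gradient (f i) x) (x - yy) : ℝ)) : EReal)
          + (g i x - g i yy) - ((ℓ / 2 * ‖x - yy‖ ^ 2 : ℝ) : EReal)) y'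

/-- Global rate for the non-convex case: if some of the objectives are bounded below,
the multiobjective proximal gradient method with ℓ > L satisfies
min_{0 ≤ j ≤ k−1} w₁(x^j) ≤ (F₀^max − F^min)·max{1, ℓ}/k for every k ≥ 1. -/
theorem proximal_gradient_rate_nonconvex
    {n m : ℕ} (hm : 0 < m)
    (f : Fin m → EuclideanSpace ℝ (Fin n) → ℝ)
    (g : Fin m → EuclideanSpace ℝ (Fin n) → EReal)
    (hf : ∀ i, ContDiff ℝ 1 (f i))
    (hg_lsc : ∀ i, LowerSemicontinuous (g i))
    (hg_ne_bot : ∀ i x, g i x ≠ ⊥)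
    (hg_proper : ∀ i, ∃ x, g i x ≠ ⊤)
    (hg_convex : ∀ i, ERealConvexOn (g i))
    (F : Fin m → EuclideanSpace ℝ (Fin n) → EReal)
    (hF : ∀ i x, F i x = (f i x : EReal) + g i x)
    (Li : Fin m → ℝ) (hLi : ∀ i, 0 < Li i)
    (hlip : ∀ i, LipschitzWith (Li i).toNNReal (gradient (f i)))
    (L : ℝ) (hL : IsGreatest (Set.range Li) L)
    (ℓ : ℝ) (hℓ : L < ℓ)
    (x d : ℕ → EuclideanSpace ℝ (Fin n))
    (hmin : ∀ (k : ℕ) (d' : EuclideanSpace ℝ (Fin n)),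
      psi f g (x k) (d k) + ((ℓ / 2 * ‖d k‖ ^ 2 : ℝ) : EReal) ≤
        psi f g (x k) d' + ((ℓ / 2 * ‖d'‖ ^ 2 : ℝ) : EReal))
    (hstep : ∀ k, x (k + 1) = x k + d k)
    (J : Finset (Fin m)) (hJ : J.Nonempty)
    (Fimin : Fin m → ℝ)
    (hbdd : ∀ i ∈ J, ∀ z, (Fimin i : EReal) ≤ F i z)
    (Fmin : ℝ) (hFmin : Fmin = J.inf' hJ Fimin)
    (F0max : EReal) (hF0max : F0max = ⨆ i, F i (x 0)) :
    ∀ k : ℕ, 1 ≤ k →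
      (⨅ j ∈ Finset.range k, wfun f g 1 (x j)) ≤
        (F0max - (Fmin : EReal)) * ((max 1 ℓ / (k : ℝ) : ℝ) : EReal) := by
  have hne : Nonempty (Fin m) := ⟨⟨0, hm⟩⟩
  obtain ⟨iL, hiL⟩ := hL.1
  have hLpos : 0 < L := hiL ▸ hLi iL
  have hℓpos : 0 < ℓ := lt_trans hLpos hℓ
  intro k hk
  have hkR : (0:ℝ) < (k:ℝ) := by exact_mod_cast hk
  by_cases hTop : F0max = ⊤
  · rw [hTop, EReal.top_sub_coe, EReal.top_mul_of_pos]
    · exact le_top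
    · exact_mod_cast (by positivity : (0:ℝ) < max 1 ℓ / (k:ℝ))
  have hgb : ∀ i (z : EuclideanSpace ℝ (Fin n)), g i z ≠ ⊥ := fun i z => hg_ne_bot i z
  have hFtop0 : ∀ i, F i (x 0) ≠ ⊤ := by
    intro i hcon
    apply hTop
    rw [hF0max]
    exact top_le_iff.mp (hcon ▸ le_iSup (fun i => F i (x 0)) i)
  have hgx0top : ∀ i, g i (x 0) ≠ ⊤ := by
    intro i hcon
    apply hFtop0 i
    rw [hF i (x 0), hcon, EReal.add_top_of_ne_bot (EReal.coe_ne_bot _)]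
  have hgood : ∀ j, ∀ i, g i (x j) ≠ ⊤ := by
    intro j
    induction j with
    | zero => exact hgx0top
    | succ j ih =>
      have hP0 : psi f g (x j) (d j) + ((ℓ / 2 * ‖d j‖ ^ 2 : ℝ) : EReal) ≤ 0 := by
        have h := hmin j 0
        rw [my_psi_zero hm f g (x j) (fun i => hg_ne_bot i (x j)) ih] at h
        simpa using h
      have hpsit : psi f g (x j) (d j) ≠ ⊤ := by
        intro hcon
        rw [hcon, EReal.top_add_coe] at hP0
        exact absurd hP0 (by simp)
      intro i hcon
      apply hpsit
      have hA : ((inner ℝ (gradient (f i) (x j)) (d j) : ℝ) : EReal)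
          + (g i (x j + d j) - g i (x j)) ≤ psi f g (x j) (d j) :=
        le_iSup (fun i' => ((inner ℝ (gradient (f i') (x j)) (d j) : ℝ) : EReal)
          + (g i' (x j + d j) - g i' (x j))) i
      rw [← hstep j, hcon] at hA
      rw [← EReal.coe_toReal (ih i) (hg_ne_bot i (x j)), EReal.top_sub_coe,
        EReal.add_top_of_ne_bot (EReal.coe_ne_bot _)] at hA
      exact top_le_iff.mp hA
  have hgreal : ∀ j i, ((g i (x j)).toReal : EReal) = g i (x j) :=
    fun j i => EReal.coe_toReal (hgood j i) (hg_ne_bot i (x j))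
  have hP : ∀ j, ∃ p : ℝ,
      ((p : ℝ) : EReal) = psi f g (x j) (d j) + ((ℓ / 2 * ‖d j‖ ^ 2 : ℝ) : EReal) ∧ p ≤ 0 := by
    intro j
    set P := psi f g (x j) (d j) + ((ℓ / 2 * ‖d j‖ ^ 2 : ℝ) : EReal) with hPdef
    have hP0 : P ≤ 0 := by
      have h := hmin j 0
      rw [my_psi_zero hm f g (x j) (fun i => hg_ne_bot i (x j)) (hgood j)] at h
      simpa [hPdef] using h
    have hPtop : P ≠ ⊤ := fun hcon => absurd (hcon ▸ hP0) (by simp)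
    have hPbot : P ≠ ⊥ := by
      rw [hPdef]
      intro hcon
      rcases EReal.add_eq_bot_iff.mp hcon with h | h
      · set i0 : Fin m := ⟨0, hm⟩
        have hA : ((inner ℝ (gradient (f i0) (x j)) (d j) : ℝ) : EReal)
            + (g i0 (x j + d j) - g i0 (x j)) ≤ psi f g (x j) (d j) :=
          le_iSup (fun i' => ((inner ℝ (gradient (f i') (x j)) (d j) : ℝ) : EReal)
            + (g i' (x j + d j) - g i' (x j))) i0
        rw [h, le_bot_iff, EReal.add_eq_bot_iff] at hA
        rcases hA with h' | h'
        · exact EReal.coe_ne_bot _ h'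
        · rw [← hstep j, ← hgreal (j+1) i0, ← hgreal j i0, ← EReal.coe_sub] at h'
          exact EReal.coe_ne_bot _ h'
      · exact EReal.coe_ne_bot _ h
    refine ⟨P.toReal, by rw [EReal.coe_toReal hPtop hPbot], ?_⟩
    have h1 := EReal.toReal_le_toReal hP0 hPbot (by simp : (0:EReal) ≠ ⊤)
    simpa using h1
  choose p hp hp0 using hP
  have hdec : ∀ j i, f i (x (j+1)) + (g i (x (j+1))).toReal ≤
      f i (x j) + (g i (x j)).toReal + p j := by
    intro j i
    have hp' := hp j
    have hA : ((inner ℝ (gradient (f i) (x j)) (d j) : ℝ) : EReal)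
        + (g i (x j + d j) - g i (x j)) ≤ psi f g (x j) (d j) :=
      le_iSup (fun i' => ((inner ℝ (gradient (f i') (x j)) (d j) : ℝ) : EReal)
        + (g i' (x j + d j) - g i' (x j))) i
    have hpsieq : psi f g (x j) (d j)
        = ((p j - ℓ / 2 * ‖d j‖ ^ 2 : ℝ) : EReal) := by
      rw [EReal.coe_sub, hp', EReal.add_sub_cancel_right]
    rw [← hstep j, ← hgreal (j+1) i, ← hgreal j i, ← EReal.coe_sub, ← EReal.coe_add,
      hpsieq] at hA
    have hAr : (inner ℝ (gradient (f i) (x j)) (d j) : ℝ)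
        + ((g i (x (j+1))).toReal - (g i (x j)).toReal)
        ≤ p j - ℓ / 2 * ‖d j‖ ^ 2 := by exact_mod_cast hA
    have hLi_le : Li i ≤ ℓ := le_of_lt (lt_of_le_of_lt (hL.2 ⟨i, rfl⟩) hℓ)
    have hdesc := my_descent_lemma (f i) (hf i) (le_of_lt (hLi i)) (hlip i) (x j) (d j)
    have hnorm : (0:ℝ) ≤ ‖d j‖ ^ 2 := by positivity
    have hfx : f i (x (j+1)) = f i (x j + d j) := by rw [hstep j]
    rw [hfx]
    nlinarith [hdesc, hAr, hnorm, hLi_le]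
  obtain ⟨i0, hi0J⟩ := hJ
  have htel : ∀ jj, f i0 (x jj) + (g i0 (x jj)).toReal + ∑ l ∈ Finset.range jj, (-(p l)) ≤
      f i0 (x 0) + (g i0 (x 0)).toReal := by
    intro jj
    induction jj with
    | zero => simp
    | succ jj ih =>
      rw [Finset.sum_range_succ]
      have h1 := hdec jj i0
      linarith
  have hFcoe : ∀ j i, F i (x j) = ((f i (x j) + (g i (x j)).toReal : ℝ) : EReal) := by
    intro j i
    rw [hF i (x j), EReal.coe_add, hgreal j i]
  have hFminle : ∀ jj, Fmin ≤ f i0 (x jj) + (g i0 (x jj)).toReal := by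
    intro jj
    have h0 : Fmin ≤ Fimin i0 := by rw [hFmin]; exact Finset.inf'_le Fimin hi0J
    have h1 : ((Fmin : ℝ) : EReal) ≤ F i0 (x jj) :=
      le_trans (EReal.coe_le_coe_iff.mpr h0) (hbdd i0 hi0J (x jj))
    rw [hFcoe jj i0] at h1
    exact_mod_cast h1
  have hF0bot : F0max ≠ ⊥ := by
    rw [hF0max]
    intro hcon
    have h1 : F i0 (x 0) ≤ ⊥ := hcon ▸ le_iSup (fun i => F i (x 0)) i0
    rw [hFcoe 0 i0] at h1
    exact EReal.coe_ne_bot _ (le_bot_iff.mp h1)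
  have hF0coe : ((F0max.toReal : ℝ) : EReal) = F0max := EReal.coe_toReal hTop hF0bot
  set R : ℝ := F0max.toReal with hR
  have hF0le : f i0 (x 0) + (g i0 (x 0)).toReal ≤ R := by
    have h1 : F i0 (x 0) ≤ F0max := hF0max ▸ le_iSup (fun i => F i (x 0)) i0
    rw [hFcoe 0 i0, ← hF0coe] at h1
    exact_mod_cast h1
  have hsum : ∑ l ∈ Finset.range k, (-(p l)) ≤ R - Fmin := by
    have h1 := htel k
    have h2 := hFminle k
    linarith
  obtain ⟨jstar, hjmem, hjmin⟩ := Finset.exists_min_image (Finset.range k) (fun l => -(p l))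
    ⟨0, Finset.mem_range.mpr hk⟩
  have hcard : (k : ℝ) * (-(p jstar)) ≤ ∑ l ∈ Finset.range k, (-(p l)) := by
    have h1 := Finset.card_nsmul_le_sum (Finset.range k) (fun l => -(p l)) (-(p jstar))
      (fun l hl => hjmin l hl)
    rwa [Finset.card_range, nsmul_eq_mul] at h1
  have hq : -(p jstar) ≤ (R - Fmin) / (k : ℝ) := by
    rw [le_div_iff₀ hkR]
    nlinarith [hcard, hsum]
  have hM1 : (1:ℝ) ≤ max 1 ℓ := le_max_left _ _
  calc (⨅ j ∈ Finset.range k, wfun f g 1 (x j)) ≤ wfun f g 1 (x jstar) :=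
        iInf₂_le jstar hjmem
    _ ≤ ((max 1 ℓ : ℝ) : EReal) * wfun f g ℓ (x jstar) :=
        my_scaling hm f g hℓpos hg_convex hgb (x jstar) (hgood jstar)
    _ ≤ ((max 1 ℓ : ℝ) : EReal) * (((-(p jstar)) : ℝ) : EReal) := by
        apply mul_le_mul_of_nonneg_left _ (by exact_mod_cast (by linarith : (0:ℝ) ≤ max 1 ℓ))
        have h1 := my_wfun_le_neg f g ℓ (x jstar) (fun i => hg_ne_bot i (x jstar))
          (hgood jstar) hgb (((p jstar : ℝ)) : EReal)
          (fun d' => by rw [hp jstar]; exact hmin jstar d')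
        rw [EReal.coe_neg]
        exact h1
    _ = ((max 1 ℓ * (-(p jstar)) : ℝ) : EReal) := (EReal.coe_mul _ _).symm
    _ ≤ (((R - Fmin) * (max 1 ℓ / (k : ℝ)) : ℝ) : EReal) := by
        apply EReal.coe_le_coe_iff.mpr
        calc max 1 ℓ * (-(p jstar)) ≤ max 1 ℓ * ((R - Fmin) / (k : ℝ)) :=
              mul_le_mul_of_nonneg_left hq (by linarith)
          _ = (R - Fmin) * (max 1 ℓ / (k : ℝ)) := by ring
    _ = (F0max - (Fmin : EReal)) * ((max 1 ℓ / (k : ℝ) : ℝ) : EReal) := by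
        rw [EReal.coe_mul, EReal.coe_sub, hF0coe]
end
end
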